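/- Let P = U₄(𝔽₂) be the group of 4×4 upper triangular matrices over 𝔽₂ with ones on the diagonal (the unipotent subgroup of GL₄(𝔽₂)), and let Φ(P) denote its Frattini subgroup, so V = P/Φ(P) is elementary abelian of rank 3. Then the image of the natural homomorphism Aut(P) → Aut(V) (induced since Φ(P) is characteristic) is isomorphic to the symmetric group Σ₃ of order 6. (Application 3.) -/

import Mathlib

open Matrix

namespace U4F2

abbrev F := ZMod 2

/-- upper unitriangular matrix with given above-diagonal entries -/
def Um (a b c d e f : F) : Matrix (Fin 4) (Fin 4) F :=
  !![1, a, b, c; 0, 1, d, e; 0, 0, 1, f; 0, 0, 0, 1]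

/-- its inverse -/
def Uinv (a b c d e f : F) : Matrix (Fin 4) (Fin 4) F :=
  Um a (b + a*d) (c + a*e + b*f + a*d*f) d (e + d*f) f

lemma Um_mul_Uinv : ∀ a b c d e f : F, Um a b c d e f * Uinv a b c d e f = 1 := by decide
lemma Uinv_mul_Um : ∀ a b c d e f : F, Uinv a b c d e f * Um a b c d e f = 1 := by decide

/-- as an element of GL₄ -/
def U (a b c d e f : F) : GL (Fin 4) F :=
  ⟨Um a b c d e f, Uinv a b c d e f, Um_mul_Uinv a b c d e f, Uinv_mul_Um a b c d e f⟩

lemma U_mul : ∀ a b c d e f a' b' c' d' e' f' : F,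
    U a b c d e f * U a' b' c' d' e' f' =
      U (a+a') (b+b'+a*d') (c+c'+a*e'+b*f') (d+d') (e+e'+d*f') (f+f') := by
  intros a b c d e f a' b' c' d' e' f'
  refine Units.ext ?_
  show Um a b c d e f * Um a' b' c' d' e' f' = _
  ext i j
  fin_cases i <;> fin_cases j <;>
    simp [U, Um, Matrix.mul_apply, Fin.sum_univ_four, Matrix.vecHead, Matrix.vecTail] <;> ring

end U4F2

namespace U4F2

section main
variable (P : Subgroup (GL (Fin 4) F))
  (hP : ∀ A : GL (Fin 4) F, A ∈ P ↔
      (∀ i j : Fin 4, j < i → (A : Matrix (Fin 4) (Fin 4) F) i j = 0) ∧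
      (∀ i : Fin 4, (A : Matrix (Fin 4) (Fin 4) F) i i = 1))

def pa (g : ↥P) : F := ((g : GL (Fin 4) F) : Matrix (Fin 4) (Fin 4) F) 0 1
def pb (g : ↥P) : F := ((g : GL (Fin 4) F) : Matrix (Fin 4) (Fin 4) F) 0 2
def pc (g : ↥P) : F := ((g : GL (Fin 4) F) : Matrix (Fin 4) (Fin 4) F) 0 3
def pd (g : ↥P) : F := ((g : GL (Fin 4) F) : Matrix (Fin 4) (Fin 4) F) 1 2
def pe (g : ↥P) : F := ((g : GL (Fin 4) F) : Matrix (Fin 4) (Fin 4) F) 1 3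
def pf (g : ↥P) : F := ((g : GL (Fin 4) F) : Matrix (Fin 4) (Fin 4) F) 2 3

include hP in
lemma U_mem (a b c d e f : F) : U a b c d e f ∈ P := by
  rw [hP]
  constructor
  · intro i j hij
    fin_cases i <;> fin_cases j <;> first | rfl | exact absurd hij (by decide)
  · intro i; fin_cases i <;> rfl

include hP in
lemma norm (g : ↥P) :
    ((g : GL (Fin 4) F) : Matrix (Fin 4) (Fin 4) F) =
      Um (pa P g) (pb P g) (pc P g) (pd P g) (pe P g) (pf P g) := by
  obtain ⟨h1, h2⟩ := (hP _).mp g.2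
  ext i j
  fin_cases i <;> fin_cases j <;>
    first
      | exact h2 _
      | exact h1 _ _ (by decide)
      | rfl


def uu (a b c d e f : F) : ↥P := ⟨U a b c d e f, U_mem P hP a b c d e f⟩

include hP in
lemma uu_eq (g : ↥P) :
    g = uu P hP (pa P g) (pb P g) (pc P g) (pd P g) (pe P g) (pf P g) :=
  Subtype.ext (Units.ext (norm P hP g))

lemma uu_mul (a b c d e f a' b' c' d' e' f' : F) :
    uu P hP a b c d e f * uu P hP a' b' c' d' e' f' =
      uu P hP (a+a') (b+b'+a*d') (c+c'+a*e'+b*f') (d+d') (e+e'+d*f') (f+f') :=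
  Subtype.ext (U_mul a b c d e f a' b' c' d' e' f')

include hP in
lemma prod_eq (g h : ↥P) :
    g * h = uu P hP (pa P g + pa P h) (pb P g + pb P h + pa P g * pd P h)
      (pc P g + pc P h + pa P g * pe P h + pb P g * pf P h) (pd P g + pd P h)
      (pe P g + pe P h + pd P g * pf P h) (pf P g + pf P h) := by
  conv_lhs => rw [uu_eq P hP g, uu_eq P hP h]
  rw [uu_mul]

lemma pa_uu (a b c d e f : F) : pa P (uu P hP a b c d e f) = a := rfl
lemma pd_uu (a b c d e f : F) : pd P (uu P hP a b c d e f) = d := rfl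
lemma pf_uu (a b c d e f : F) : pf P (uu P hP a b c d e f) = f := rfl

include hP in
lemma pa_mul (g h : ↥P) : pa P (g * h) = pa P g + pa P h := by
  rw [prod_eq P hP g h]; rfl
include hP in
lemma pd_mul (g h : ↥P) : pd P (g * h) = pd P g + pd P h := by
  rw [prod_eq P hP g h]; rfl
include hP in
lemma pf_mul (g h : ↥P) : pf P (g * h) = pf P g + pf P h := by
  rw [prod_eq P hP g h]; rfl

/-- the three coordinate homomorphisms to `Multiplicative F` -/
def piA : ↥P →* Multiplicative F where
  toFun g := Multiplicative.ofAdd (pa P g)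
  map_one' := rfl
  map_mul' g h := by simp [pa_mul P hP g h]

def piD : ↥P →* Multiplicative F where
  toFun g := Multiplicative.ofAdd (pd P g)
  map_one' := rfl
  map_mul' g h := by simp [pd_mul P hP g h]

def piF : ↥P →* Multiplicative F where
  toFun g := Multiplicative.ofAdd (pf P g)
  map_one' := rfl
  map_mul' g h := by simp [pf_mul P hP g h]


include hP in
lemma piA_surj : Function.Surjective (piA P hP) := fun x =>
  ⟨uu P hP x.toAdd 0 0 0 0 0, rfl⟩
include hP in
lemma piD_surj : Function.Surjective (piD P hP) := fun x =>
  ⟨uu P hP 0 0 0 x.toAdd 0 0, rfl⟩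
include hP in
lemma piF_surj : Function.Surjective (piF P hP) := fun x =>
  ⟨uu P hP 0 0 0 0 0 x.toAdd, rfl⟩

lemma card_multF : Nat.card (Multiplicative F) = 2 := by
  rw [Nat.card_eq_fintype_card]; rfl

lemma index_of_surj {G : Type*} [Group G] (f : G →* Multiplicative F)
    (hf : Function.Surjective f) : f.ker.index = 2 := by
  rw [Subgroup.index_ker, MonoidHom.range_eq_top_of_surjective f hf]
  exact (Nat.card_congr Subgroup.topEquiv.toEquiv).trans card_multF

lemma isCoatom_of_index_two {G : Type*} [Group G] (K : Subgroup G)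
    (h : K.index = 2) : IsCoatom K := by
  constructor
  · intro htop
    rw [htop, Subgroup.index_top] at h; exact absurd h (by norm_num)
  · intro J hJ
    have hle : K ≤ J := le_of_lt hJ
    have h2 : K.relIndex J * J.index = 2 := by
      rw [Subgroup.relIndex_mul_index hle, h]
    have hdvd : J.index ∣ 2 := Dvd.intro_left _ h2
    rcases (Nat.prime_two.eq_one_or_self_of_dvd _ hdvd) with h1 | h1
    · exact Subgroup.index_eq_one.mp h1
    · exfalso
      rw [h1] at h2
      have : K.relIndex J = 1 := by omega
      exact (lt_iff_le_not_ge.mp hJ).2 (Subgroup.relIndex_eq_one.mp this)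

/-- the candidate for the Frattini subgroup -/
def Qs : Subgroup ↥P := (piA P hP).ker ⊓ (piD P hP).ker ⊓ (piF P hP).ker

lemma Um_pow4 : ∀ a b c d e f : F, (Um a b c d e f)^4 = 1 := by decide

include hP in
lemma uu_pow4 (a b c d e f : F) : (uu P hP a b c d e f)^4 = 1 := by
  refine Subtype.ext (Units.ext ?_)
  rw [SubmonoidClass.coe_pow, Units.val_pow_eq_pow_val]
  exact Um_pow4 a b c d e f

include hP in
lemma isPGroup : IsPGroup 2 ↥P := by
  intro g
  refine ⟨2, ?_⟩
  show g ^ 4 = 1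
  rw [uu_eq P hP g]
  exact uu_pow4 P hP _ _ _ _ _ _

lemma Um_comm_decomp : ∀ b c e : F,
    Um 0 b c 0 e 0 =
      Um 1 0 0 0 0 0 * Um 0 0 0 b c 0 * Uinv 1 0 0 0 0 0 * Uinv 0 0 0 b c 0 *
      (Um 0 0 0 e 0 0 * Um 0 0 0 0 0 1 * Uinv 0 0 0 e 0 0 * Uinv 0 0 0 0 0 1) := by
  decide

include hP in
lemma uu_comm_decomp (b c e : F) :
    uu P hP 0 b c 0 e 0 =
      uu P hP 1 0 0 0 0 0 * uu P hP 0 0 0 b c 0 * (uu P hP 1 0 0 0 0 0)⁻¹ *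
        (uu P hP 0 0 0 b c 0)⁻¹ *
      (uu P hP 0 0 0 e 0 0 * uu P hP 0 0 0 0 0 1 * (uu P hP 0 0 0 e 0 0)⁻¹ *
        (uu P hP 0 0 0 0 0 1)⁻¹) :=
  Subtype.ext (Units.ext (Um_comm_decomp b c e))


/-- quotient by a normal coatom is commutative-ish: key lemma -/
lemma quot_coatom_comm {G : Type*} [Group G] {K : Subgroup G} [K.Normal]
    (hK : IsCoatom K) (x y : G ⧸ K) : x * y = y * x := by
  set S := Subgroup.zpowers x with hS
  have hle : K ≤ S.comap (QuotientGroup.mk' K) := by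
    intro k hk
    have h1 : QuotientGroup.mk' K k = 1 := (QuotientGroup.eq_one_iff k).mpr hk
    rw [Subgroup.mem_comap, h1]
    exact S.one_mem
  rcases eq_or_lt_of_le hle with heq | hlt
  · -- then x = 1
    obtain ⟨g, hg⟩ := QuotientGroup.mk'_surjective K x
    have hgS : g ∈ S.comap (QuotientGroup.mk' K) := by
      rw [Subgroup.mem_comap, hg]
      exact Subgroup.mem_zpowers x
    rw [← heq] at hgS
    have : x = 1 := by rw [← hg]; exact (QuotientGroup.eq_one_iff g).mpr hgS
    rw [this, one_mul, mul_one]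
  · have htop : S.comap (QuotientGroup.mk' K) = ⊤ := hK.2 _ hlt
    have hStop : S = ⊤ := by
      apply Subgroup.comap_injective (QuotientGroup.mk'_surjective K)
      rw [htop, Subgroup.comap_top]
    have hy : y ∈ S := by rw [hStop]; trivial
    obtain ⟨n, hn⟩ := hy
    rw [← hn]
    show x * x ^ n = x ^ n * x
    exact (Commute.zpow_right (Commute.refl x) n).eq

end main

section main2
variable (P : Subgroup (GL (Fin 4) F))
  (hP : ∀ A : GL (Fin 4) F, A ∈ P ↔
      (∀ i j : Fin 4, j < i → (A : Matrix (Fin 4) (Fin 4) F) i j = 0) ∧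
      (∀ i : Fin 4, (A : Matrix (Fin 4) (Fin 4) F) i i = 1))

include hP in
lemma Qs_le_coatom {K : Subgroup ↥P} (hK : IsCoatom K) : Qs P hP ≤ K := by
  haveI : Fact (Nat.Prime 2) := ⟨Nat.prime_two⟩
  have hnil : Group.IsNilpotent ↥P := (isPGroup P hP).isNilpotent
  haveI hnorm : K.Normal :=
    Subgroup.NormalizerCondition.normal_of_coatom K normalizerCondition_of_isNilpotent hK
  intro g hg
  rw [Qs, Subgroup.mem_inf, Subgroup.mem_inf] at hg
  obtain ⟨⟨hga, hgd⟩, hgf⟩ := hg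
  have hpa : pa P g = 0 := by
    have := MonoidHom.mem_ker.mp hga
    exact this
  have hpd : pd P g = 0 := by
    have := MonoidHom.mem_ker.mp hgd
    exact this
  have hpf : pf P g = 0 := by
    have := MonoidHom.mem_ker.mp hgf
    exact this
  rw [← QuotientGroup.eq_one_iff g]
  have hdecomp := uu_comm_decomp P hP (pb P g) (pc P g) (pe P g)
  have hgeq : g = uu P hP 0 (pb P g) (pc P g) 0 (pe P g) 0 := by
    conv_lhs => rw [uu_eq P hP g]
    rw [hpa, hpd, hpf]
  rw [hgeq, hdecomp]
  set m := QuotientGroup.mk' K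
  have hcomm1 : ∀ u v : ↥P, m (u * v * u⁻¹ * v⁻¹) = 1 := by
    intro u v
    simp only [_root_.map_mul, map_inv]
    rw [quot_coatom_comm hK (m u) (m v)]
    group
  show m (_ * _) = 1
  rw [_root_.map_mul, hcomm1, hcomm1, one_mul]

include hP in
lemma frattini_eq : frattini ↥P = Qs P hP := by
  apply le_antisymm
  · refine le_inf (le_inf ?_ ?_) ?_ <;>
      exact frattini_le_coatom
        (isCoatom_of_index_two _ (index_of_surj _ (by first
          | exact piA_surj P hP | exact piD_surj P hP | exact piF_surj P hP)))
  · intro g hg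
    have : ∀ K : Subgroup ↥P, IsCoatom K → g ∈ K := fun K hK => Qs_le_coatom P hP hK hg
    simp only [frattini, Order.radical, Subgroup.mem_iInf]
    intro K hK
    exact this K hK


lemma gamma_compat1 : ∀ f f' : F, ((((f) + (f')))) = ((((f))) + (((f')))) := by decide
lemma gamma_compat2 : ∀ d e f d' e' f' : F, ((((e) + (e') + (d)*(f'))) + (((d) + (d')))*(((f) + (f')))) = ((((e) + (d)*(f))) + (((e') + (d')*(f'))) + (((f)))*(((d')))) := by decide
lemma gamma_compat3 : ∀ a b c d e f a' b' c' d' e' f' : F, ((((c) + (c') + (a)*(e') + (b)*(f'))) + (((a) + (a')))*(((e) + (e') + (d)*(f'))) + (((b) + (b') + (a)*(d')))*(((f) + (f'))) + (((a) + (a')))*(((d) + (d')))*(((f) + (f')))) = ((((c) + (a)*(e) + (b)*(f) + (a)*(d)*(f))) + (((c') + (a')*(e') + (b')*(f') + (a')*(d')*(f'))) + (((f)))*(((b') + (a')*(d'))) + (((e) + (d)*(f)))*(((a')))) := by decide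
lemma gamma_compat4 : ∀ d d' : F, ((((d) + (d')))) = ((((d))) + (((d')))) := by decide
lemma gamma_compat5 : ∀ a b d a' b' d' : F, ((((b) + (b') + (a)*(d'))) + (((a) + (a')))*(((d) + (d')))) = ((((b) + (a)*(d))) + (((b') + (a')*(d'))) + (((d)))*(((a')))) := by decide
lemma gamma_compat6 : ∀ a a' : F, ((((a) + (a')))) = ((((a))) + (((a')))) := by decide
lemma alpha_compat1 : ∀ a f a' f' : F, ((((a) + (a'))) + (((f) + (f')))) = ((((a) + (f))) + (((a') + (f')))) := by decide
lemma alpha_compat2 : ∀ a b d e f b' d' e' f' : F, ((((b) + (b') + (a)*(d'))) + (((e) + (e') + (d)*(f'))) + (((d) + (d')))*(((f) + (f')))) = ((((b) + (e) + (d)*(f))) + (((b') + (e') + (d')*(f'))) + (((a) + (f)))*(((d')))) := by decide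
lemma alpha_compat3 : ∀ a b c d e f c' e' f' : F, ((((c) + (c') + (a)*(e') + (b)*(f'))) + (((e) + (e') + (d)*(f'))) + (((e) + (e') + (d)*(f')))*(((f) + (f')))) = ((((c) + (e) + (e)*(f))) + (((c') + (e') + (e')*(f'))) + (((a) + (f)))*(((e'))) + (((b) + (e) + (d)*(f)))*(((f')))) := by decide
lemma alpha_compat4 : ∀ d d' : F, ((((d) + (d')))) = ((((d))) + (((d')))) := by decide
lemma alpha_compat5 : ∀ d e e' f' : F, ((((e) + (e') + (d)*(f')))) = ((((e))) + (((e'))) + (((d)))*(((f')))) := by decide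
lemma alpha_compat6 : ∀ f f' : F, ((((f) + (f')))) = ((((f))) + (((f')))) := by decide
lemma gamma_invol1 : ∀ a : F, ((((a)))) = a := by decide
lemma gamma_invol2 : ∀ a b d : F, ((((b) + (a)*(d))) + (((d)))*(((a)))) = b := by decide
lemma gamma_invol3 : ∀ a b c d e f : F, ((((c) + (a)*(e) + (b)*(f) + (a)*(d)*(f))) + (((f)))*(((b) + (a)*(d))) + (((e) + (d)*(f)))*(((a))) + (((f)))*(((d)))*(((a)))) = c := by decide
lemma gamma_invol4 : ∀ d : F, ((((d)))) = d := by decide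
lemma gamma_invol5 : ∀ d e f : F, ((((e) + (d)*(f))) + (((f)))*(((d)))) = e := by decide
lemma gamma_invol6 : ∀ f : F, ((((f)))) = f := by decide
lemma alpha_invol1 : ∀ a f : F, ((((a) + (f))) + (((f)))) = a := by decide
lemma alpha_invol2 : ∀ b d e f : F, ((((b) + (e) + (d)*(f))) + (((e))) + (((d)))*(((f)))) = b := by decide
lemma alpha_invol3 : ∀ c e f : F, ((((c) + (e) + (e)*(f))) + (((e))) + (((e)))*(((f)))) = c := by decide
lemma alpha_invol4 : ∀ d : F, ((((d)))) = d := by decide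
lemma alpha_invol5 : ∀ e : F, ((((e)))) = e := by decide
lemma alpha_invol6 : ∀ f : F, ((((f)))) = f := by decide
end main2

lemma sq_v2class : ∀ b c e : F, Um 0 b c 1 e 0 * Um 0 b c 1 e 0 = 1 := by decide
lemma sq_g1 : Um 1 0 0 0 0 0 * Um 1 0 0 0 0 0 = 1 := by decide
lemma sq_g3 : Um 0 0 0 0 0 1 * Um 0 0 0 0 0 1 = 1 := by decide
lemma sq_g13 : Um 1 0 0 0 0 1 * Um 1 0 0 0 0 1 = 1 := by decide
lemma nsq110 : ∀ b c e : F, Um 1 b c 1 e 0 * Um 1 b c 1 e 0 ≠ 1 := by decide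
lemma nsq011 : ∀ b c e : F, Um 0 b c 1 e 1 * Um 0 b c 1 e 1 ≠ 1 := by decide
lemma nsq111 : ∀ b c e : F, Um 1 b c 1 e 1 * Um 1 b c 1 e 1 ≠ 1 := by decide
lemma nsq_other : ∀ a d f : F, (a = 0 ∧ d = 0 ∧ f = 0) ∨ (a = 0 ∧ d = 1 ∧ f = 0) ∨
    ∃ b c e : F, Um a b c d e f * Um a b c d e f ≠ 1 := by decide
lemma F_cases : ∀ z : F, z = 0 ∨ z = 1 := by decide

section main3
variable (P : Subgroup (GL (Fin 4) F))
  (hP : ∀ A : GL (Fin 4) F, A ∈ P ↔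
      (∀ i j : Fin 4, j < i → (A : Matrix (Fin 4) (Fin 4) F) i j = 0) ∧
      (∀ i : Fin 4, (A : Matrix (Fin 4) (Fin 4) F) i i = 1))

lemma pb_uu (a b c d e f : F) : pb P (uu P hP a b c d e f) = b := rfl
lemma pc_uu (a b c d e f : F) : pc P (uu P hP a b c d e f) = c := rfl
lemma pe_uu (a b c d e f : F) : pe P (uu P hP a b c d e f) = e := rfl

include hP in
lemma pb_mul (g h : ↥P) : pb P (g * h) = pb P g + pb P h + pa P g * pd P h := by
  rw [prod_eq P hP g h]; rfl
include hP in
lemma pc_mul (g h : ↥P) :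
    pc P (g * h) = pc P g + pc P h + pa P g * pe P h + pb P g * pf P h := by
  rw [prod_eq P hP g h]; rfl
include hP in
lemma pe_mul (g h : ↥P) : pe P (g * h) = pe P g + pe P h + pd P g * pf P h := by
  rw [prod_eq P hP g h]; rfl

lemma uu_congr {a b c d e f a' b' c' d' e' f' : F} (h1 : a = a') (h2 : b = b')
    (h3 : c = c') (h4 : d = d') (h5 : e = e') (h6 : f = f') :
    uu P hP a b c d e f = uu P hP a' b' c' d' e' f' := by
  subst h1; subst h2; subst h3; subst h4; subst h5; subst h6; rfl

def gammaFun (g : ↥P) : ↥P :=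
  uu P hP ((pf P g)) ((pe P g) + (pd P g)*(pf P g)) ((pc P g) + (pa P g)*(pe P g) + (pb P g)*(pf P g) + (pa P g)*(pd P g)*(pf P g)) ((pd P g)) ((pb P g) + (pa P g)*(pd P g)) ((pa P g))

def alphaFun (g : ↥P) : ↥P :=
  uu P hP ((pa P g) + (pf P g)) ((pb P g) + (pe P g) + (pd P g)*(pf P g)) ((pc P g) + (pe P g) + (pe P g)*(pf P g)) ((pd P g)) ((pe P g)) ((pf P g))

include hP in
lemma gammaFun_mul (g h : ↥P) :
    gammaFun P hP (g * h) = gammaFun P hP g * gammaFun P hP h := by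
  simp only [gammaFun]
  rw [uu_mul, pa_mul P hP g h, pb_mul P hP g h, pc_mul P hP g h, pd_mul P hP g h,
    pe_mul P hP g h, pf_mul P hP g h]
  exact uu_congr P hP (gamma_compat1 (pf P g) (pf P h)) (gamma_compat2 (pd P g) (pe P g) (pf P g) (pd P h) (pe P h) (pf P h)) (gamma_compat3 (pa P g) (pb P g) (pc P g) (pd P g) (pe P g) (pf P g) (pa P h) (pb P h) (pc P h) (pd P h) (pe P h) (pf P h)) (gamma_compat4 (pd P g) (pd P h)) (gamma_compat5 (pa P g) (pb P g) (pd P g) (pa P h) (pb P h) (pd P h)) (gamma_compat6 (pa P g) (pa P h))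

include hP in
lemma alphaFun_mul (g h : ↥P) :
    alphaFun P hP (g * h) = alphaFun P hP g * alphaFun P hP h := by
  simp only [alphaFun]
  rw [uu_mul, pa_mul P hP g h, pb_mul P hP g h, pc_mul P hP g h, pd_mul P hP g h,
    pe_mul P hP g h, pf_mul P hP g h]
  exact uu_congr P hP (alpha_compat1 (pa P g) (pf P g) (pa P h) (pf P h)) (alpha_compat2 (pa P g) (pb P g) (pd P g) (pe P g) (pf P g) (pb P h) (pd P h) (pe P h) (pf P h)) (alpha_compat3 (pa P g) (pb P g) (pc P g) (pd P g) (pe P g) (pf P g) (pc P h) (pe P h) (pf P h)) (alpha_compat4 (pd P g) (pd P h)) (alpha_compat5 (pd P g) (pe P g) (pe P h) (pf P h)) (alpha_compat6 (pf P g) (pf P h))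

include hP in
lemma gammaFun_invol (g : ↥P) : gammaFun P hP (gammaFun P hP g) = g := by
  conv_rhs => rw [uu_eq P hP g]
  simp only [gammaFun, pa_uu, pb_uu, pc_uu, pd_uu, pe_uu, pf_uu]
  exact uu_congr P hP (gamma_invol1 (pa P g)) (gamma_invol2 (pa P g) (pb P g) (pd P g)) (gamma_invol3 (pa P g) (pb P g) (pc P g) (pd P g) (pe P g) (pf P g)) (gamma_invol4 (pd P g)) (gamma_invol5 (pd P g) (pe P g) (pf P g)) (gamma_invol6 (pf P g))

include hP in
lemma alphaFun_invol (g : ↥P) : alphaFun P hP (alphaFun P hP g) = g := by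
  conv_rhs => rw [uu_eq P hP g]
  simp only [alphaFun, pa_uu, pb_uu, pc_uu, pd_uu, pe_uu, pf_uu]
  exact uu_congr P hP (alpha_invol1 (pa P g) (pf P g)) (alpha_invol2 (pb P g) (pd P g) (pe P g) (pf P g)) (alpha_invol3 (pc P g) (pe P g) (pf P g)) (alpha_invol4 (pd P g)) (alpha_invol5 (pe P g)) (alpha_invol6 (pf P g))

def gammaAut : MulAut ↥P :=
  { toFun := gammaFun P hP, invFun := gammaFun P hP,
    left_inv := gammaFun_invol P hP, right_inv := gammaFun_invol P hP,
    map_mul' := gammaFun_mul P hP }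

def alphaAut : MulAut ↥P :=
  { toFun := alphaFun P hP, invFun := alphaFun P hP,
    left_inv := alphaFun_invol P hP, right_inv := alphaFun_invol P hP,
    map_mul' := alphaFun_mul P hP }

end main3

section main4
variable (P : Subgroup (GL (Fin 4) F))
  (hP : ∀ A : GL (Fin 4) F, A ∈ P ↔
      (∀ i j : Fin 4, j < i → (A : Matrix (Fin 4) (Fin 4) F) i j = 0) ∧
      (∀ i : Fin 4, (A : Matrix (Fin 4) (Fin 4) F) i i = 1))

include hP in
lemma mk_eq_iff (g h : ↥P) :
    (g : ↥P ⧸ frattini ↥P) = (h : ↥P ⧸ frattini ↥P) ↔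
      (pa P g = pa P h ∧ pd P g = pd P h ∧ pf P g = pf P h) := by
  rw [QuotientGroup.eq, frattini_eq P hP, Qs, Subgroup.mem_inf, Subgroup.mem_inf]
  have key : ∀ (q : ↥P →* Multiplicative F) (w : ↥P → F),
      (∀ x : ↥P, q x = Multiplicative.ofAdd (w x)) →
      (g⁻¹ * h ∈ q.ker ↔ w g = w h) := by
    intro q w hq
    rw [MonoidHom.mem_ker, _root_.map_mul, map_inv, inv_mul_eq_one, hq, hq]
    exact ⟨fun hh => Multiplicative.ofAdd.injective hh, fun hh => by rw [hh]⟩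
  rw [key (piA P hP) (pa P) (fun _ => rfl), key (piD P hP) (pd P) (fun _ => rfl),
    key (piF P hP) (pf P) (fun _ => rfl)]
  tauto

/-- the class of the unipotent with superdiagonal `(a, d, f)` -/
def el (a d f : F) : ↥P ⧸ frattini ↥P := ((uu P hP a 0 0 d 0 f : ↥P) : ↥P ⧸ frattini ↥P)

include hP in
lemma mk_param (g : ↥P) :
    (g : ↥P ⧸ frattini ↥P) = el P hP (pa P g) (pd P g) (pf P g) := by
  rw [el, mk_eq_iff P hP]
  exact ⟨rfl, rfl, rfl⟩

include hP in
lemma el_mul (a d f a' d' f' : F) :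
    el P hP a d f * el P hP a' d' f' = el P hP (a + a') (d + d') (f + f') := by
  rw [el, el, ← QuotientGroup.mk_mul, mk_param P hP, pa_mul P hP, pd_mul P hP, pf_mul P hP]
  rw [pa_uu, pa_uu, pd_uu, pd_uu, pf_uu, pf_uu, el]

include hP in
lemma el_inj (a d f a' d' f' : F) :
    el P hP a d f = el P hP a' d' f' ↔ (a = a' ∧ d = d' ∧ f = f') := by
  rw [el, el, mk_eq_iff P hP, pa_uu, pa_uu, pd_uu, pd_uu, pf_uu, pf_uu]

include hP in
lemma el_one : el P hP 0 0 0 = 1 := by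
  rw [el]
  have : (uu P hP 0 0 0 0 0 0 : ↥P) = 1 := by
    refine Subtype.ext (Units.ext ?_)
    show Um 0 0 0 0 0 0 = 1
    decide
  rw [this, QuotientGroup.mk_one]

include hP in
lemma sq_bridge (g : ↥P) :
    g * g = 1 ↔
      Um (pa P g) (pb P g) (pc P g) (pd P g) (pe P g) (pf P g) *
        Um (pa P g) (pb P g) (pc P g) (pd P g) (pe P g) (pf P g) = 1 := by
  rw [Subtype.ext_iff, Units.ext_iff]
  show ((g : GL (Fin 4) F) : Matrix (Fin 4) (Fin 4) F) *
      ((g : GL (Fin 4) F) : Matrix (Fin 4) (Fin 4) F) = 1 ↔ _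
  rw [norm P hP g]

include hP in
lemma uu_sq_bridge (a b c d e f : F) :
    (uu P hP a b c d e f) * (uu P hP a b c d e f) = 1 ↔
      Um a b c d e f * Um a b c d e f = 1 := sq_bridge P hP _

include hP in
lemma V_el_cases (v : ↥P ⧸ frattini ↥P) : ∃ a d f : F, v = el P hP a d f := by
  obtain ⟨g, rfl⟩ := QuotientGroup.mk_surjective v
  exact ⟨_, _, _, mk_param P hP g⟩

include hP in
lemma inv_class_v2 (g : ↥P) (hg : (g : ↥P ⧸ frattini ↥P) = el P hP 0 1 0) :
    g * g = 1 := by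
  rw [el, mk_eq_iff P hP, pa_uu, pd_uu, pf_uu] at hg
  obtain ⟨h1, h2, h3⟩ := hg
  rw [sq_bridge P hP, h1, h2, h3]
  exact sq_v2class _ _ _

include hP in
lemma noinv_class (g : ↥P) (a f : F) (haf : ¬(a = 0 ∧ f = 0))
    (hg : (g : ↥P ⧸ frattini ↥P) = el P hP a 1 f) : g * g ≠ 1 := by
  rw [el, mk_eq_iff P hP, pa_uu, pd_uu, pf_uu] at hg
  obtain ⟨h1, h2, h3⟩ := hg
  intro hsq
  rw [sq_bridge P hP, h1, h2, h3] at hsq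
  rcases F_cases a with rfl | rfl <;> rcases F_cases f with rfl | rfl
  · exact absurd ⟨rfl, rfl⟩ haf
  · exact nsq011 _ _ _ hsq
  · exact nsq110 _ _ _ hsq
  · exact nsq111 _ _ _ hsq

include hP in
lemma inv_unique (v : ↥P ⧸ frattini ↥P) (hv : v ≠ 1)
    (h : ∀ g : ↥P, (g : ↥P ⧸ frattini ↥P) = v → g * g = 1) : v = el P hP 0 1 0 := by
  obtain ⟨a, d, f, rfl⟩ := V_el_cases P hP v
  rcases nsq_other a d f with ⟨rfl, rfl, rfl⟩ | ⟨rfl, rfl, rfl⟩ | ⟨b, c, e, hbce⟩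
  · exact absurd (el_one P hP) hv
  · rfl
  · exfalso
    refine hbce ?_
    rw [← uu_sq_bridge P hP]
    refine h _ ?_
    rw [mk_param P hP, pa_uu, pd_uu, pf_uu]

include hP in
lemma exinv_class (a f : F) :
    ∃ g : ↥P, (g : ↥P ⧸ frattini ↥P) = el P hP a 0 f ∧ g * g = 1 := by
  refine ⟨uu P hP a 0 0 0 0 f, ?_, ?_⟩
  · rw [mk_param P hP, pa_uu, pd_uu, pf_uu]
  · rw [uu_sq_bridge P hP]
    rcases F_cases a with rfl | rfl <;> rcases F_cases f with rfl | rfl <;> decide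

include hP in
lemma exinv_classify (v : ↥P ⧸ frattini ↥P) (hv1 : v ≠ 1) (hv2 : v ≠ el P hP 0 1 0)
    (h : ∃ g : ↥P, (g : ↥P ⧸ frattini ↥P) = v ∧ g * g = 1) :
    v = el P hP 1 0 0 ∨ v = el P hP 0 0 1 ∨ v = el P hP 1 0 1 := by
  obtain ⟨a, d, f, rfl⟩ := V_el_cases P hP v
  obtain ⟨g, hg, hgsq⟩ := h
  rcases F_cases d with rfl | rfl
  · rcases F_cases a with rfl | rfl <;> rcases F_cases f with rfl | rfl
    · exact absurd (el_one P hP) hv1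
    · right; left; rfl
    · left; rfl
    · right; right; rfl
  · rcases F_cases a with rfl | rfl <;> rcases F_cases f with rfl | rfl
    · exact absurd rfl hv2
    · exact absurd hgsq (noinv_class P hP g 0 1 (by simp) hg)
    · exact absurd hgsq (noinv_class P hP g 1 0 (by simp) hg)
    · exact absurd hgsq (noinv_class P hP g 1 1 (by simp) hg)

end main4

section main5
variable (P : Subgroup (GL (Fin 4) F))
  (hP : ∀ A : GL (Fin 4) F, A ∈ P ↔
      (∀ i j : Fin 4, j < i → (A : Matrix (Fin 4) (Fin 4) F) i j = 0) ∧
      (∀ i : Fin 4, (A : Matrix (Fin 4) (Fin 4) F) i i = 1))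
  (ρ : MulAut ↥P →* MulAut (↥P ⧸ frattini ↥P))
  (hρ : ∀ (φ : MulAut ↥P) (g : ↥P),
      ρ φ ((g : ↥P ⧸ frattini ↥P)) = ((φ g : ↥P) : ↥P ⧸ frattini ↥P))

include hP hρ in
lemma sigma_fixes_v2 (φ : MulAut ↥P) : ρ φ (el P hP 0 1 0) = el P hP 0 1 0 := by
  have hv2ne1 : el P hP 0 1 0 ≠ 1 := by
    rw [← el_one P hP]
    intro h
    have h2 := ((el_inj P hP 0 1 0 0 0 0).mp h).2.1
    exact absurd h2 (by decide)
  have hne : ρ φ (el P hP 0 1 0) ≠ 1 := by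
    intro h0
    exact hv2ne1 ((ρ φ).injective (h0.trans (map_one (ρ φ)).symm))
  refine inv_unique P hP _ hne ?_
  intro h hh
  have h2 : ((φ⁻¹ h : ↥P) : ↥P ⧸ frattini ↥P) = el P hP 0 1 0 := by
    have hmk := hρ φ⁻¹ h
    rw [map_inv] at hmk
    rw [← hmk, hh]
    exact MulAut.inv_apply_self _ (ρ φ) _
  have hsq := inv_class_v2 P hP (φ⁻¹ h) h2
  have hmul := congrArg φ hsq
  rw [_root_.map_mul, _root_.map_one, MulAut.apply_inv_self] at hmul
  exact hmul

include hP hρ in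
lemma sigma_T (φ : MulAut ↥P) (v : ↥P ⧸ frattini ↥P)
    (hv : v = el P hP 1 0 0 ∨ v = el P hP 0 0 1 ∨ v = el P hP 1 0 1) :
    ρ φ v = el P hP 1 0 0 ∨ ρ φ v = el P hP 0 0 1 ∨ ρ φ v = el P hP 1 0 1 := by
  have hvne1 : v ≠ 1 := by
    rw [← el_one P hP]
    rcases hv with rfl | rfl | rfl <;>
      · intro h
        obtain ⟨h1, h2, h3⟩ := (el_inj P hP _ _ _ 0 0 0).mp h
        first
          | exact absurd h1 (by decide)
          | exact absurd h3 (by decide)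
  have hvne2 : v ≠ el P hP 0 1 0 := by
    rcases hv with rfl | rfl | rfl <;>
      · intro h
        obtain ⟨h1, h2, h3⟩ := (el_inj P hP _ _ _ 0 1 0).mp h
        exact absurd h2 (by decide)
  have hex : ∃ g : ↥P, (g : ↥P ⧸ frattini ↥P) = v ∧ g * g = 1 := by
    rcases hv with rfl | rfl | rfl
    · exact exinv_class P hP 1 0
    · exact exinv_class P hP 0 1
    · exact exinv_class P hP 1 1
  obtain ⟨g, hg, hgsq⟩ := hex
  refine exinv_classify P hP _ ?_ ?_ ?_
  · intro h0
    exact hvne1 ((ρ φ).injective (h0.trans (map_one (ρ φ)).symm))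
  · intro h0
    rw [← sigma_fixes_v2 P hP ρ hρ φ] at h0
    exact hvne2 ((ρ φ).injective h0)
  · refine ⟨φ g, ?_, ?_⟩
    · rw [← hρ φ g, hg]
    · rw [← _root_.map_mul, hgsq, _root_.map_one]

end main5

set_option maxHeartbeats 2000000 in
theorem main
    (P : Subgroup (GL (Fin 4) (ZMod 2)))
    (hP : ∀ A : GL (Fin 4) (ZMod 2), A ∈ P ↔
      (∀ i j : Fin 4, j < i → (A : Matrix (Fin 4) (Fin 4) (ZMod 2)) i j = 0) ∧
      (∀ i : Fin 4, (A : Matrix (Fin 4) (Fin 4) (ZMod 2)) i i = 1))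
    (ρ : MulAut ↥P →* MulAut (↥P ⧸ frattini ↥P))
    (hρ : ∀ (φ : MulAut ↥P) (g : ↥P),
      ρ φ ((g : ↥P ⧸ frattini ↥P)) = ((φ g : ↥P) : ↥P ⧸ frattini ↥P)) :
    Nonempty (↥ρ.range ≃* Equiv.Perm (Fin 3)) := by
  classical
  -- the three distinguished classes
  set v1 : ↥P ⧸ frattini ↥P := el P hP 1 0 0 with hv1def
  set v3 : ↥P ⧸ frattini ↥P := el P hP 0 0 1 with hv3def
  set w : ↥P ⧸ frattini ↥P := el P hP 1 0 1 with hwdef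
  set v2 : ↥P ⧸ frattini ↥P := el P hP 0 1 0 with hv2def
  have hne13 : v1 ≠ v3 := by
    intro h; exact absurd ((el_inj P hP _ _ _ _ _ _).mp h).1 (by decide)
  have hne1w : v1 ≠ w := by
    intro h; exact absurd ((el_inj P hP _ _ _ _ _ _).mp h).2.2 (by decide)
  have hne3w : v3 ≠ w := by
    intro h; exact absurd ((el_inj P hP _ _ _ _ _ _).mp h).1 (by decide)
  -- the permutation action on {v1, v3, w}
  set elt : Fin 3 → ↥P ⧸ frattini ↥P := ![v1, v3, w] with helt
  have heltT : ∀ i : Fin 3, elt i = v1 ∨ elt i = v3 ∨ elt i = w := by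
    intro i
    fin_cases i
    · exact Or.inl rfl
    · exact Or.inr (Or.inl rfl)
    · exact Or.inr (Or.inr rfl)
  set idx : (↥P ⧸ frattini ↥P) → Fin 3 :=
    fun v => if v = v1 then 0 else if v = v3 then 1 else 2 with hidx
  have idx_v1 : idx v1 = 0 := by simp [hidx]
  have idx_v3 : idx v3 = 1 := by simp [hidx, Ne.symm hne13]
  have idx_w : idx w = 2 := by simp [hidx, Ne.symm hne1w, Ne.symm hne3w]
  have idx_elt : ∀ i : Fin 3, idx (elt i) = i := by
    intro i
    fin_cases i
    · exact idx_v1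
    · exact idx_v3
    · exact idx_w
  have elt_idx : ∀ v : ↥P ⧸ frattini ↥P,
      (v = v1 ∨ v = v3 ∨ v = w) → elt (idx v) = v := by
    rintro v (rfl | rfl | rfl)
    · rw [idx_v1]; rfl
    · rw [idx_v3]; rfl
    · rw [idx_w]; rfl
  have hT : ∀ σ : ↥ρ.range, ∀ v, (v = v1 ∨ v = v3 ∨ v = w) →
      ((σ : MulAut (↥P ⧸ frattini ↥P)) v = v1 ∨
       (σ : MulAut (↥P ⧸ frattini ↥P)) v = v3 ∨
       (σ : MulAut (↥P ⧸ frattini ↥P)) v = w) := by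
    rintro ⟨σ, φ, rfl⟩ v hv
    exact sigma_T P hP ρ hρ φ v hv
  -- the homomorphism to Perm (Fin 3)
  set Fm : ↥ρ.range →* Equiv.Perm (Fin 3) := MonoidHom.mk'
    (fun σ =>
      { toFun := fun i => idx ((σ : MulAut (↥P ⧸ frattini ↥P)) (elt i))
        invFun := fun i => idx (((σ⁻¹ : ↥ρ.range) : MulAut (↥P ⧸ frattini ↥P)) (elt i))
        left_inv := by
          intro i
          dsimp only
          rw [elt_idx _ (hT σ (elt i) (heltT i))]
          show idx (((σ : MulAut (↥P ⧸ frattini ↥P))⁻¹)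
            ((σ : MulAut (↥P ⧸ frattini ↥P)) (elt i))) = i
          rw [MulAut.inv_apply_self]
          exact idx_elt i
        right_inv := by
          intro i
          dsimp only
          rw [elt_idx _ (hT σ⁻¹ (elt i) (heltT i))]
          show idx (((σ : MulAut (↥P ⧸ frattini ↥P)))
            (((σ : MulAut (↥P ⧸ frattini ↥P))⁻¹) (elt i))) = i
          rw [MulAut.apply_inv_self]
          exact idx_elt i })
    (by
      intro σ τ
      refine Equiv.ext fun i => ?_
      show idx (((σ * τ : ↥ρ.range) : MulAut (↥P ⧸ frattini ↥P)) (elt i)) =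
        idx ((σ : MulAut (↥P ⧸ frattini ↥P))
          (elt (idx ((τ : MulAut (↥P ⧸ frattini ↥P)) (elt i)))))
      rw [elt_idx _ (hT τ (elt i) (heltT i))]
      rfl)
    with hFm
  have hFmapply : ∀ (σ : ↥ρ.range) (i : Fin 3),
      Fm σ i = idx ((σ : MulAut (↥P ⧸ frattini ↥P)) (elt i)) := fun σ i => rfl
  -- injectivity
  have hinj : Function.Injective Fm := by
    refine (injective_iff_map_eq_one Fm).mpr ?_
    intro σ hσ
    have hfix : ∀ i : Fin 3, (σ : MulAut (↥P ⧸ frattini ↥P)) (elt i) = elt i := by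
      intro i
      have h1 : idx ((σ : MulAut (↥P ⧸ frattini ↥P)) (elt i)) = i := by
        rw [← hFmapply σ i, hσ]; rfl
      calc (σ : MulAut (↥P ⧸ frattini ↥P)) (elt i)
          = elt (idx ((σ : MulAut (↥P ⧸ frattini ↥P)) (elt i))) :=
            (elt_idx _ (hT σ (elt i) (heltT i))).symm
        _ = elt i := by rw [h1]
    obtain ⟨φ, hφ⟩ := σ.2
    have h2 : (σ : MulAut (↥P ⧸ frattini ↥P)) v2 = v2 := by
      rw [← hφ]; exact sigma_fixes_v2 P hP ρ hρ φ
    have hv1fix : (σ : MulAut (↥P ⧸ frattini ↥P)) v1 = v1 := hfix 0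
    have hv3fix : (σ : MulAut (↥P ⧸ frattini ↥P)) v3 = v3 := hfix 1
    have hfix1 : ∀ a : F, (σ : MulAut (↥P ⧸ frattini ↥P)) (el P hP a 0 0) = el P hP a 0 0 := by
      intro a
      rcases F_cases a with rfl | rfl
      · rw [el_one P hP, _root_.map_one]
      · exact hv1fix
    have hfix2 : ∀ d : F, (σ : MulAut (↥P ⧸ frattini ↥P)) (el P hP 0 d 0) = el P hP 0 d 0 := by
      intro d
      rcases F_cases d with rfl | rfl
      · rw [el_one P hP, _root_.map_one]
      · exact h2
    have hfix3 : ∀ f : F, (σ : MulAut (↥P ⧸ frattini ↥P)) (el P hP 0 0 f) = el P hP 0 0 f := by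
      intro f
      rcases F_cases f with rfl | rfl
      · rw [el_one P hP, _root_.map_one]
      · exact hv3fix
    have hall : ∀ v : ↥P ⧸ frattini ↥P, (σ : MulAut (↥P ⧸ frattini ↥P)) v = v := by
      intro v
      obtain ⟨a, d, f, rfl⟩ := V_el_cases P hP v
      have hdecomp : el P hP a d f = el P hP a 0 0 * el P hP 0 d 0 * el P hP 0 0 f := by
        rw [el_mul P hP, el_mul P hP]
        simp
      rw [hdecomp, _root_.map_mul, _root_.map_mul, hfix1, hfix2, hfix3]
    exact Subtype.ext (MulEquiv.ext hall)
  -- the two distinguished automorphisms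
  have hgam : ∀ a d f : F, ρ (gammaAut P hP) (el P hP a d f) = el P hP f d a := by
    intro a d f
    rw [el, el, hρ, mk_param P hP]
    exact (el_inj P hP _ _ _ _ _ _).mpr ⟨rfl, rfl, rfl⟩
  have halp : ∀ a d f : F, ρ (alphaAut P hP) (el P hP a d f) = el P hP (a + f) d f := by
    intro a d f
    rw [el, el, hρ, mk_param P hP]
    exact (el_inj P hP _ _ _ _ _ _).mpr ⟨rfl, rfl, rfl⟩
  let sγ : ↥ρ.range := ⟨ρ (gammaAut P hP), MonoidHom.mem_range.mpr ⟨gammaAut P hP, rfl⟩⟩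
  let sα : ↥ρ.range := ⟨ρ (alphaAut P hP), MonoidHom.mem_range.mpr ⟨alphaAut P hP, rfl⟩⟩
  have hFγ : Fm sγ = Equiv.swap 0 1 := by
    refine Equiv.ext fun i => ?_
    rcases (by decide : ∀ j : Fin 3, j = 0 ∨ j = 1 ∨ j = 2) i with rfl | rfl | rfl
    · have h0 : (sγ : MulAut (↥P ⧸ frattini ↥P)) (elt 0) = v3 := hgam 1 0 0
      rw [hFmapply, h0, idx_v3]; decide
    · have h0 : (sγ : MulAut (↥P ⧸ frattini ↥P)) (elt 1) = v1 := hgam 0 0 1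
      rw [hFmapply, h0, idx_v1]; decide
    · have h0 : (sγ : MulAut (↥P ⧸ frattini ↥P)) (elt 2) = w := hgam 1 0 1
      rw [hFmapply, h0, idx_w]; decide
  have hFα : Fm sα = Equiv.swap 1 2 := by
    refine Equiv.ext fun i => ?_
    rcases (by decide : ∀ j : Fin 3, j = 0 ∨ j = 1 ∨ j = 2) i with rfl | rfl | rfl
    · have h0 : (sα : MulAut (↥P ⧸ frattini ↥P)) (elt 0) = v1 :=
        (halp 1 0 0).trans ((el_inj P hP _ _ _ _ _ _).mpr ⟨by decide, rfl, rfl⟩)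
      rw [hFmapply, h0, idx_v1]; decide
    · have h0 : (sα : MulAut (↥P ⧸ frattini ↥P)) (elt 1) = w :=
        (halp 0 0 1).trans ((el_inj P hP _ _ _ _ _ _).mpr ⟨by decide, rfl, rfl⟩)
      rw [hFmapply, h0, idx_w]; decide
    · have h0 : (sα : MulAut (↥P ⧸ frattini ↥P)) (elt 2) = v3 :=
        (halp 1 0 1).trans ((el_inj P hP _ _ _ _ _ _).mpr ⟨by decide, rfl, rfl⟩)
      rw [hFmapply, h0, idx_v3]; decide
  have hsurj : Function.Surjective Fm := by
    intro p
    have h6 : ∀ q : Equiv.Perm (Fin 3), q = 1 ∨ q = Equiv.swap 0 1 ∨ q = Equiv.swap 1 2 ∨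
        q = Equiv.swap 0 1 * Equiv.swap 1 2 ∨ q = Equiv.swap 1 2 * Equiv.swap 0 1 ∨
        q = Equiv.swap 0 1 * Equiv.swap 1 2 * Equiv.swap 0 1 := by decide
    rcases h6 p with rfl | rfl | rfl | rfl | rfl | rfl
    · exact ⟨1, _root_.map_one Fm⟩
    · exact ⟨sγ, hFγ⟩
    · exact ⟨sα, hFα⟩
    · exact ⟨sγ * sα, by rw [_root_.map_mul, hFγ, hFα]⟩
    · exact ⟨sα * sγ, by rw [_root_.map_mul, hFα, hFγ]⟩
    · exact ⟨sγ * sα * sγ, by rw [_root_.map_mul, _root_.map_mul, hFγ, hFα]⟩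
  exact ⟨MulEquiv.ofBijective Fm ⟨hinj, hsurj⟩⟩

end U4F2

/-- **Application 3.** Let `P = U₄(𝔽₂)` be the group of `4×4` upper triangular matrices
over `𝔽₂` with ones on the diagonal (as a subgroup of `GL₄(𝔽₂)`), and let
`Φ(P) = frattini P` be its Frattini subgroup, so `V = P/Φ(P)` is elementary abelian of
rank `3`.  Then the image of the natural homomorphism `ρ : Aut(P) → Aut(V)` (with
`ρ(φ)(gΦ(P)) = φ(g)Φ(P)`) is isomorphic to the symmetric group `Σ₃`. -/
theorem unitriangular_aut_image_iso_S3
    (P : Subgroup (GL (Fin 4) (ZMod 2)))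
    (hP : ∀ A : GL (Fin 4) (ZMod 2), A ∈ P ↔
      (∀ i j : Fin 4, j < i → (A : Matrix (Fin 4) (Fin 4) (ZMod 2)) i j = 0) ∧
      (∀ i : Fin 4, (A : Matrix (Fin 4) (Fin 4) (ZMod 2)) i i = 1))
    (ρ : MulAut ↥P →* MulAut (↥P ⧸ frattini ↥P))
    (hρ : ∀ (φ : MulAut ↥P) (g : ↥P),
      ρ φ ((g : ↥P ⧸ frattini ↥P)) = ((φ g : ↥P) : ↥P ⧸ frattini ↥P)) :
    Nonempty (↥ρ.range ≃* Equiv.Perm (Fin 3)) := by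
  exact U4F2.main P hP ρ hρ
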